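/- arXiv:1912.02592 — 2 statements merged into one kernel-verified Lean document; each statement's English description precedes it below -/
import Mathlib

section
/- Case (iii) of the correctness lemma for Π_Mul^m (a corrupt evaluator forces reconstruction of a wrong m_z): let m_x, m_y, λ_x, λ_y, λ_z, δ_x, δ_y, δ_z, Δ ∈ R = ZMod (2^ℓ), with γ = λ_x·λ_y and χ = δ_x·λ_y + δ_y·λ_x + δ_z − γ both computed honestly, and m_z = m_x·m_y − m_x·λ_y − m_y·λ_x + λ_z + γ the correct masked output. Suppose the honest evaluator reconstructs m_z + Δ. Then P₀'s verification value m*_z = − (m_x + δ_x)·λ_y − (m_y + δ_y)·λ_x + λ_z + 2·γ + χ equals the evaluator's check value (m_z + Δ) − m_x·m_y + δ_z if and only if Δ = 0. -/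
/-- Case (iii) of the correctness lemma for `Π_Mul^m` (corrupt evaluator forces
reconstruction of `m_z + Δ`): with honest `γ = λ_x·λ_y` and
`χ = δ_x·λ_y + δ_y·λ_x + δ_z − γ`, `P₀`'s verification value
`m*_z = −(m_x+δ_x)·λ_y − (m_y+δ_y)·λ_x + λ_z + 2γ + χ` equals the check value
`(m_z + Δ) − m_x·m_y + δ_z` iff `Δ = 0`. -/
theorem mul_mal_online_check (ℓ : ℕ) (hℓ : 1 ≤ ℓ)
    (mx my lx ly lz dx dy dz Δ γ χ mz mzs : ZMod (2 ^ ℓ))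
    (hγ : γ = lx * ly)
    (hχ : χ = dx * ly + dy * lx + dz - γ)
    (hmz : mz = mx * my - mx * ly - my * lx + lz + γ)
    (hmzs : mzs = -((mx + dx) * ly) - (my + dy) * lx + lz + 2 * γ + χ) :
    mzs = (mz + Δ) - mx * my + dz ↔ Δ = 0 := by
  subst hγ hχ hmz hmzs
  constructor
  · intro h; linear_combination -h
  · intro h; subst h; ring
end

section
/- MSB of a product equals the XOR of the MSBs (the identity underlying the bit-extraction protocol Π_BitExt): let ℓ ≥ 1 and let r, a be nonzero integers such that each of r, a, and r·a lies in the interval [−2^(ℓ−1), 2^(ℓ−1)). For an integer n, write msb(n) for the Boolean predicate 2^(ℓ−1) ≤ ((n : ZMod (2^ℓ))).val. Then msb(r·a) = (msb(r) ≠ msb(a)), i.e. the most significant bit of r·a in two's-complement representation is the XOR of the most significant bits of r and a; equivalently msb(a) = msb(r) XOR msb(r·a), so the parties recover MSB(a) by XORing the sign bit p = MSB(r) with the sign bit q = MSB(r·a). -/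
/-- `msb n` is the Boolean predicate "the most significant bit of the
two's-complement representative of `n` in `ZMod (2^ℓ)` equals `1`". -/
def msb (ℓ : ℕ) (n : ℤ) : Prop :=
  2 ^ (ℓ - 1) ≤ ((n : ZMod (2 ^ ℓ))).val

lemma msb_iff_neg (ℓ : ℕ) (hℓ : 1 ≤ ℓ) (n : ℤ)
    (hlb : -(2 ^ (ℓ - 1)) ≤ n) (hub : n < 2 ^ (ℓ - 1)) :
    msb ℓ n ↔ n < 0 := by
  haveI : NeZero (2 ^ ℓ) := ⟨by positivity⟩
  have hpow : (2 : ℤ) ^ ℓ = 2 ^ (ℓ - 1) * 2 := by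
    rw [← pow_succ]
    congr 1
    omega
  have hval : (((n : ZMod (2 ^ ℓ)).val : ℤ)) = n % (2 ^ ℓ) := by
    rw [ZMod.val_intCast]
    push_cast
    ring_nf
  unfold msb
  rw [show ((2:ℕ) ^ (ℓ-1) ≤ (n : ZMod (2 ^ ℓ)).val) ↔
      ((2:ℤ) ^ (ℓ-1) ≤ ((n : ZMod (2 ^ ℓ)).val : ℤ)) by exact_mod_cast Iff.rfl, hval]
  rcases lt_or_ge n 0 with h | h
  · have : n % 2 ^ ℓ = n + 2 ^ ℓ := by
      rw [← Int.add_mul_emod_self_left (b := 2 ^ ℓ) (c := 1)]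
      rw [mul_one]
      apply Int.emod_eq_of_lt <;> omega
    rw [this]
    constructor <;> intro <;> omega
  · have : n % 2 ^ ℓ = n := by
      apply Int.emod_eq_of_lt h
      omega
    rw [this]
    constructor <;> intro <;> omega

/-- MSB of a product is the XOR of the MSBs: for nonzero integers `r, a`
with `r`, `a` and `r·a` all in `[−2^(ℓ−1), 2^(ℓ−1))`, we have
`msb(r·a) = msb(r) ⊕ msb(a)`, equivalently `msb(a) = msb(r) ⊕ msb(r·a)`. -/
theorem msb_mul_xor (ℓ : ℕ) (hℓ : 1 ≤ ℓ) (r a : ℤ)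
    (hr : r ≠ 0) (ha : a ≠ 0)
    (hrlb : -(2 ^ (ℓ - 1)) ≤ r) (hrub : r < 2 ^ (ℓ - 1))
    (halb : -(2 ^ (ℓ - 1)) ≤ a) (haub : a < 2 ^ (ℓ - 1))
    (hralb : -(2 ^ (ℓ - 1)) ≤ r * a) (hraub : r * a < 2 ^ (ℓ - 1)) :
    (msb ℓ (r * a) ↔ Xor' (msb ℓ r) (msb ℓ a)) ∧
      (msb ℓ a ↔ Xor' (msb ℓ r) (msb ℓ (r * a))) := by
  rw [msb_iff_neg ℓ hℓ r hrlb hrub, msb_iff_neg ℓ hℓ a halb haub,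
    msb_iff_neg ℓ hℓ (r * a) hralb hraub]
  unfold Xor'
  constructor
  · constructor
    · intro h
      rcases lt_or_ge r 0 with hr' | hr' <;> rcases lt_or_ge a 0 with ha' | ha'
      · nlinarith
      · exact Or.inl ⟨hr', by omega⟩
      · exact Or.inr ⟨ha', by omega⟩
      · nlinarith [mul_nonneg hr' ha']
    · rintro (⟨h1, h2⟩ | ⟨h1, h2⟩)
      · have ha' : 0 < a := lt_of_le_of_ne (not_lt.mp h2) (Ne.symm ha)
        exact mul_neg_of_neg_of_pos h1 ha'
      · have hr' : 0 < r := lt_of_le_of_ne (not_lt.mp h2) (Ne.symm hr)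
        exact mul_neg_of_pos_of_neg hr' h1
  · constructor
    · intro h
      rcases lt_or_ge r 0 with hr' | hr'
      · exact Or.inl ⟨hr', by nlinarith⟩
      · have hr'' : 0 < r := lt_of_le_of_ne hr' (Ne.symm hr)
        exact Or.inr ⟨mul_neg_of_pos_of_neg hr'' h, by omega⟩
    · rintro (⟨h1, h2⟩ | ⟨h1, h2⟩)
      · by_contra hna
        exact h2 (mul_neg_of_neg_of_pos h1 (lt_of_le_of_ne (not_lt.mp hna) (Ne.symm ha)))
      · by_contra hna
        have hr'' : 0 < r := lt_of_le_of_ne (not_lt.mp h2) (Ne.symm hr)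
        nlinarith [not_lt.mp hna]
end
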